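/- Let $R$ be a commutative ring, $A \supseteq I$ an $R$-algebra with ideal $I$, and $B$ an $R$-algebra with an injective $R$-algebra map $B \to A/I$ making $A/I$ a faithfully flat $B$-module. If $A$, $A/I$, and $B$ are all flat as $R$-modules, then the fiber product $B \times_{A/I} A$ is flat as an $R$-module. -/

import Mathlib

set_option synthInstance.maxHeartbeats 1000000
set_option maxHeartbeats 1000000

open TensorProduct

/-- A product of two flat modules is flat. -/
lemma aux_flat_prod (R M N : Type*) [CommRing R] [AddCommGroup M] [AddCommGroup N]
    [Module R M] [Module R N] [Module.Flat R M] [Module.Flat R N] :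
    Module.Flat R (M × N) := by
  rw [Module.Flat.iff_rTensor_injective']
  intro I
  have hM := (Module.Flat.iff_rTensor_injective' (R := R) (M := M)).mp ‹_› I
  have hN := (Module.Flat.iff_rTensor_injective' (R := R) (M := N)).mp ‹_› I
  have key : ⇑(LinearMap.rTensor (M × N) I.subtype) =
      ⇑((TensorProduct.prodRight R R R M N).symm.toLinearMap ∘ₗ
        ((LinearMap.rTensor M I.subtype).prodMap (LinearMap.rTensor N I.subtype)) ∘ₗ
        (TensorProduct.prodRight R R I M N).toLinearMap) := by
    funext x
    induction x using TensorProduct.induction_on with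
    | zero => simp; rw [Prod.mk_zero_zero, map_zero]
    | tmul i mn =>
        obtain ⟨m, n⟩ := mn
        simp
    | add x y hx hy => simp [map_add, hx, hy]
  rw [key]
  simp only [LinearMap.coe_comp, LinearEquiv.coe_coe, LinearMap.coe_prodMap]
  exact (TensorProduct.prodRight R R R M N).symm.injective.comp
    ((hM.prodMap hN).comp (TensorProduct.prodRight R R I M N).injective)

/-- If the cokernel of an injection is flat, tensoring preserves the injection. -/
lemma aux_purity {R K F Q : Type*} (N : Type*) [CommRing R] [AddCommGroup K] [AddCommGroup F]
    [AddCommGroup Q] [AddCommGroup N] [Module R K] [Module R F] [Module R Q] [Module R N]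
    [Module.Flat R Q] (i : K →ₗ[R] F) (p : F →ₗ[R] Q) (hi : Function.Injective i)
    (hexact : Function.Exact i p) (hp : Function.Surjective p) :
    Function.Injective (i.lTensor N) := by
  set q : (N →₀ R) →ₗ[R] N := Finsupp.linearCombination R id with hq
  have hqsurj : Function.Surjective q := Finsupp.linearCombination_id_surjective R N
  exact lTensor_injective_of_exact_of_exact_of_rTensor_injective
    (M₁ := LinearMap.ker q) (M₂ := N →₀ R) (M₃ := N) (f₂ := q) (g₁ := i) (g₂ := p)
    (LinearMap.exact_subtype_ker_map q) hqsurj hexact hp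
    (by exact Module.Flat.rTensor_preserves_injective_linearMap _ (LinearMap.ker q).injective_subtype)
    (Module.Flat.lTensor_preserves_injective_linearMap i hi)

/-- The kernel of a surjection from a flat module onto a flat module is flat. -/
lemma aux_flat_ker {R F Q : Type*} [CommRing R] [AddCommGroup F] [AddCommGroup Q]
    [Module R F] [Module R Q] [Module.Flat R F] [Module.Flat R Q]
    (p : F →ₗ[R] Q) (hp : Function.Surjective p) :
    Module.Flat R (LinearMap.ker p) := by
  rw [Module.Flat.iff_rTensor_injective']
  intro J
  set i := (LinearMap.ker p).subtype with hi
  have h1 : Function.Injective (i.lTensor J) :=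
    aux_purity J i p (LinearMap.ker p).injective_subtype (LinearMap.exact_subtype_ker_map p) hp
  have h2 : Function.Injective (LinearMap.rTensor F J.subtype) :=
    (Module.Flat.iff_rTensor_injective' (R := R) (M := F)).mp ‹_› J
  have hmap : Function.Injective (TensorProduct.map J.subtype i) := by
    rw [← LinearMap.rTensor_comp_lTensor]
    exact h2.comp h1
  have : Function.Injective (⇑(i.lTensor R) ∘ ⇑(LinearMap.rTensor (LinearMap.ker p) J.subtype)) := by
    rw [← LinearMap.coe_comp, LinearMap.lTensor_comp_rTensor]
    exact hmap
  exact Function.Injective.of_comp this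

/-- If `A`, `A/I`, `B` are flat `R`-modules and `B → A/I` is an injective
`R`-algebra map making `A/I` a faithfully flat `B`-module, then the fiber product
`B ×_{A/I} A` is a flat `R`-module. -/
theorem stmt_3 (R : Type*) [CommRing R] (A B : Type*) [CommRing A] [CommRing B]
    [Algebra R A] [Algebra R B] (I : Ideal A)
    (g : B →ₐ[R] (A ⧸ I)) (hg : Function.Injective g)
    (hff : letI := g.toRingHom.toAlgebra; Module.FaithfullyFlat B (A ⧸ I))
    (hA : Module.Flat R A) (hAI : Module.Flat R (A ⧸ I)) (hB : Module.Flat R B) :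
    Module.Flat R
      (AlgHom.equalizer (g.comp (AlgHom.fst R B A))
        ((Ideal.Quotient.mkₐ R I).comp (AlgHom.snd R B A))) := by
  haveI := hA; haveI := hAI; haveI := hB
  haveI : Module.Flat R (B × A) := aux_flat_prod R B A
  set φ : (B × A) →ₗ[R] A ⧸ I :=
    g.toLinearMap.comp (LinearMap.fst R B A) -
      (Ideal.Quotient.mkₐ R I).toLinearMap.comp (LinearMap.snd R B A) with hφ
  have hsurj : Function.Surjective φ := by
    intro c
    obtain ⟨a, ha⟩ := Ideal.Quotient.mk_surjective (-c)
    refine ⟨(0, a), ?_⟩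
    simp [hφ, ha]
  haveI : Module.Flat R (LinearMap.ker φ) := aux_flat_ker φ hsurj
  refine Module.Flat.of_linearEquiv (M := LinearMap.ker φ) ?_
  exact
    { toFun := fun x => ⟨x.1, by
        have hx := x.2
        rw [AlgHom.mem_equalizer] at hx
        simp only [AlgHom.coe_comp, Function.comp_apply] at hx
        simp only [hφ, LinearMap.mem_ker, LinearMap.sub_apply, LinearMap.coe_comp,
          Function.comp_apply, LinearMap.fst_apply, LinearMap.snd_apply, sub_eq_zero,
          AlgHom.toLinearMap_apply]
        exact hx⟩
      invFun := fun x => ⟨x.1, by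
        have hx := x.2
        simp only [hφ, LinearMap.mem_ker, LinearMap.sub_apply, LinearMap.coe_comp,
          Function.comp_apply, LinearMap.fst_apply, LinearMap.snd_apply, sub_eq_zero,
          AlgHom.toLinearMap_apply] at hx
        rw [AlgHom.mem_equalizer]
        exact hx⟩
      map_add' := fun x y => rfl
      map_smul' := fun r x => rfl
      left_inv := fun x => rfl
      right_inv := fun x => rfl }
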